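/- With g_n as above (case a = -1), the generating function G(z) = \sum g_n z^n equals 1/((z/\alpha; q^2)_\infty (z/\beta; q^2)_\infty), where \alpha, \beta are the roots of 1 - (1+q) z - q z^2 = (1 - z/\alpha)(1 - z/\beta) with \alpha < 0 < \beta and \beta < |\alpha|. -/

import Mathlib

/-- The coefficients of case `a = -1` of Proposition 4.1:
`g_0 = 1`, `g_1 = 1/(1-q)`, and `(1 - q^{2n}) g_n = q g_{n-2} + (1+q) g_{n-1}`. -/
noncomputable def gSeq (q : ℝ) : ℕ → ℝ
  | 0 => 1
  | 1 => 1 / (1 - q)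
  | (n + 2) => (q * gSeq q n + (1 + q) * gSeq q (n + 1)) / (1 - q ^ (2 * (n + 2)))

open Complex Filter

lemma gSeq_nonneg (q : ℝ) (hq0 : 0 < q) (hq1 : q < 1) : ∀ n, 0 ≤ gSeq q n := by
  intro n
  induction n using Nat.strong_induction_on with
  | _ n ih =>
    match n with
    | 0 => norm_num [gSeq]
    | 1 =>
      have : 0 < 1 - q := by linarith
      rw [gSeq]; positivity
    | (m + 2) =>
      have h0 := ih m (by omega)
      have h1 := ih (m + 1) (by omega)
      have hpow : q ^ (2 * (m + 2)) < 1 := pow_lt_one₀ hq0.le hq1 (by omega)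
      rw [gSeq]
      apply div_nonneg (by nlinarith) (by linarith)

lemma gSeq_rec (q : ℝ) (hq0 : 0 < q) (hq1 : q < 1) (n : ℕ) :
    gSeq q (n + 2) * (1 - q ^ (2 * (n + 2))) = q * gSeq q n + (1 + q) * gSeq q (n + 1) := by
  have hpow : q ^ (2 * (n + 2)) < 1 := pow_lt_one₀ hq0.le hq1 (by omega)
  rw [gSeq, div_mul_cancel₀]
  linarith

lemma gSeq_bound (q : ℝ) (hq0 : 0 < q) (hq1 : q < 1) (t : ℝ) (ht0 : 0 ≤ t)
    (hc : (1 + q) * t + q * t ^ 2 < 1) :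
    ∃ M : ℝ, ∀ n, gSeq q n * t ^ n ≤ M := by
  have hgnn := gSeq_nonneg q hq0 hq1
  obtain ⟨N, hN⟩ := exists_pow_lt_of_lt_one (by linarith : (0:ℝ) < 1 - ((1 + q) * t + q * t ^ 2)) hq1
  refine ⟨∑ i ∈ Finset.range (N + 2), gSeq q i * t ^ i, ?_⟩
  intro n
  induction n using Nat.strong_induction_on with
  | _ n ih =>
    by_cases hn : n < N + 2
    · exact Finset.single_le_sum (f := fun i => gSeq q i * t ^ i)
        (fun i _ => mul_nonneg (hgnn i) (pow_nonneg ht0 i)) (Finset.mem_range.mpr hn)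
    · push_neg at hn
      obtain ⟨m, rfl⟩ : ∃ m, n = m + 2 := ⟨n - 2, by omega⟩
      have h0 := ih m (by omega)
      have h1 := ih (m + 1) (by omega)
      have hpow : q ^ (2 * (m + 2)) ≤ q ^ N :=
        pow_le_pow_of_le_one hq0.le hq1.le (by omega)
      have hpowN : q ^ N < 1 - ((1 + q) * t + q * t ^ 2) := hN
      have hcnn : (0:ℝ) ≤ (1 + q) * t + q * t ^ 2 := by positivity
      have hden : (0:ℝ) < 1 - q ^ (2 * (m + 2)) := by linarith
      have hrec := gSeq_rec q hq0 hq1 m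
      have hM0 : 0 ≤ ∑ i ∈ Finset.range (N + 2), gSeq q i * t ^ i :=
        Finset.sum_nonneg fun i _ => mul_nonneg (hgnn i) (pow_nonneg ht0 i)
      have key : gSeq q (m + 2) * t ^ (m + 2) * (1 - q ^ (2 * (m + 2)))
          ≤ (∑ i ∈ Finset.range (N + 2), gSeq q i * t ^ i) * (1 - q ^ (2 * (m + 2))) := by
        have e1 : gSeq q (m + 2) * t ^ (m + 2) * (1 - q ^ (2 * (m + 2)))
            = q * t ^ 2 * (gSeq q m * t ^ m) + (1 + q) * t * (gSeq q (m + 1) * t ^ (m + 1)) := by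
          rw [show gSeq q (m + 2) * t ^ (m + 2) * (1 - q ^ (2 * (m + 2)))
              = gSeq q (m + 2) * (1 - q ^ (2 * (m + 2))) * t ^ (m + 2) by ring, hrec]
          ring
        rw [e1]
        set M := ∑ i ∈ Finset.range (N + 2), gSeq q i * t ^ i with hM
        have b1 : q * t ^ 2 * (gSeq q m * t ^ m) ≤ q * t ^ 2 * M := by
          apply mul_le_mul_of_nonneg_left h0; positivity
        have b2 : (1 + q) * t * (gSeq q (m + 1) * t ^ (m + 1)) ≤ (1 + q) * t * M := by
          apply mul_le_mul_of_nonneg_left h1; positivity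
        nlinarith [mul_nonneg hM0 (pow_nonneg hq0.le (2 * (m + 2)))]
      exact le_of_mul_le_mul_right key hden

lemma gSeq_summable (q : ℝ) (hq0 : 0 < q) (hq1 : q < 1) (β : ℝ) (hβ : 0 < β)
    (hroot : (1 + q) * β + q * β ^ 2 = 1) (x : ℝ) (hx0 : 0 ≤ x) (hxβ : x < β) :
    Summable (fun n => gSeq q n * x ^ n) := by
  set t := (x + β) / 2 with hted
  have ht0 : 0 < t := by positivity
  have htβ : t < β := by rw [hted]; linarith
  have hxt : x < t := by rw [hted]; linarith
  clear_value t
  have ht2 : t ^ 2 < β ^ 2 := by nlinarith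
  have hc : (1 + q) * t + q * t ^ 2 < 1 := by nlinarith [mul_lt_mul_of_pos_left ht2 hq0]
  obtain ⟨M, hM⟩ := gSeq_bound q hq0 hq1 t ht0.le hc
  have hgnn := gSeq_nonneg q hq0 hq1
  have hgeo : Summable (fun n => M * (x / t) ^ n) :=
    Summable.mul_left _ (summable_geometric_of_lt_one (by positivity)
      (by rw [div_lt_one ht0]; exact hxt))
  refine Summable.of_nonneg_of_le (fun n => mul_nonneg (hgnn n) (pow_nonneg hx0 n)) ?_ hgeo
  intro n
  have hxx : t ^ n * (x / t) ^ n = x ^ n := by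
    rw [div_pow, mul_div_cancel₀ _ (pow_ne_zero n ht0.ne')]
  rw [← hxx, ← mul_assoc]
  exact mul_le_mul_of_nonneg_right (hM n) (by positivity)



lemma qfact_norm_lt (c x : ℂ) (hc : ‖c‖ < 1) (hx : ‖x‖ < 1) (k : ℕ) :
    ‖c * x ^ k‖ < 1 := by
  rw [norm_mul, norm_pow]
  calc ‖c‖ * ‖x‖ ^ k ≤ ‖c‖ * 1 := by
        exact mul_le_mul_of_nonneg_left (pow_le_one₀ (norm_nonneg x) hx.le) (norm_nonneg c)
    _ < 1 := by linarith

lemma qfact_ne_zero (c x : ℂ) (hc : ‖c‖ < 1) (hx : ‖x‖ < 1) (k : ℕ) :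
    (1 : ℂ) - c * x ^ k ≠ 0 := by
  intro h0
  have h1 : (1 : ℂ) = c * x ^ k := by linear_combination h0
  have := qfact_norm_lt c x hc hx k
  rw [← h1, norm_one] at this
  exact lt_irrefl _ this

lemma qfact_log_summable (c x : ℂ) (hc : ‖c‖ < 1) (hx : ‖x‖ < 1) :
    Summable (fun k : ℕ => Complex.log (1 - c * x ^ k)) := by
  have hgeo : Summable (fun k : ℕ => (‖c‖ * (1 - ‖c‖)⁻¹ / 2 + 1) * (‖c‖ * ‖x‖ ^ k)) := by
    exact ((summable_geometric_of_lt_one (norm_nonneg x) hx).mul_left ‖c‖).mul_left _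
  apply Summable.of_norm_bounded hgeo
  intro k
  set m := ‖c‖ * ‖x‖ ^ k with hm
  have hm0 : 0 ≤ m := by positivity
  have hmc : m ≤ ‖c‖ := by
    calc m ≤ ‖c‖ * 1 := mul_le_mul_of_nonneg_left (pow_le_one₀ (norm_nonneg x) hx.le) (norm_nonneg c)
    _ = ‖c‖ := mul_one _
  have hm1 : m < 1 := lt_of_le_of_lt hmc hc
  have hnm : ‖-(c * x ^ k)‖ = m := by rw [norm_neg, norm_mul, norm_pow]
  have hlt : ‖-(c * x ^ k)‖ < 1 := by rw [hnm]; exact hm1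
  have hb := Complex.norm_log_one_add_le hlt
  rw [hnm] at hb
  have he : (1 : ℂ) - c * x ^ k = 1 + -(c * x ^ k) := by ring
  rw [he]
  refine hb.trans ?_
  have hinv : (1 - m)⁻¹ ≤ (1 - ‖c‖)⁻¹ := by
    apply inv_anti₀ (by linarith) (by linarith)
  have h2 : m * (1 - m)⁻¹ ≤ ‖c‖ * (1 - ‖c‖)⁻¹ :=
    mul_le_mul hmc hinv (inv_nonneg.mpr (by linarith)) (norm_nonneg c)
  nlinarith [mul_le_mul_of_nonneg_left h2 hm0]

lemma qfact_multipliable (c x : ℂ) (hc : ‖c‖ < 1) (hx : ‖x‖ < 1) :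
    Multipliable (fun k : ℕ => 1 - c * x ^ k) :=
  Complex.multipliable_of_summable_log (qfact_log_summable c x hc hx)

lemma qprod_tail_tendsto (c x : ℂ) (hc : ‖c‖ < 1) (hx : ‖x‖ < 1) :
    Tendsto (fun n : ℕ => ∏' k : ℕ, (1 - c * x ^ (k + n))) atTop (nhds 1) := by
  have heq : (fun n : ℕ => Complex.exp (∑' k : ℕ, Complex.log (1 - c * x ^ (k + n))))
      = fun n : ℕ => ∏' k : ℕ, (1 - c * x ^ (k + n)) := funext fun n =>
    Complex.cexp_tsum_eq_tprod
    (fun k => qfact_ne_zero c x hc hx (k + n))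
    ((summable_nat_add_iff n).2 (qfact_log_summable c x hc hx))
  have hT : Tendsto (fun n : ℕ => ∑' k : ℕ, Complex.log (1 - c * x ^ (k + n))) atTop (nhds 0) :=
    tendsto_sum_nat_add (fun j => Complex.log (1 - c * x ^ j))
  have := (Complex.continuous_exp.tendsto 0).comp hT
  rw [Complex.exp_zero] at this
  refine this.congr fun n => ?_
  exact congrFun heq n

set_option maxHeartbeats 1000000 in
lemma qprod_split (c x : ℂ) (hc : ‖c‖ < 1) (hx : ‖x‖ < 1) :
    (∏' k : ℕ, (1 - c * x ^ k)) = (1 - c) * ∏' k : ℕ, (1 - (x * c) * x ^ k) := by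
  have hxc : ‖x * c‖ < 1 := by
    rw [norm_mul]; nlinarith [norm_nonneg x, norm_nonneg c]
  have hm : Multipliable (fun n : ℕ => 1 - c * x ^ (n + 1)) :=
    (qfact_multipliable (x * c) x hxc hx).congr fun n => by ring
  rw [tprod_eq_zero_mul' hm]
  congr 1
  · simp
  · exact tprod_congr fun k => by ring



def shiftOne (f : ℕ → ℂ) : ℕ → ℂ := fun n => match n with | 0 => 0 | (m+1) => f m
def shiftTwo (f : ℕ → ℂ) : ℕ → ℂ := fun n => match n with | 0 => 0 | 1 => 0 | (m+2) => f m

lemma shiftOne_hasSum {f : ℕ → ℂ} {S : ℂ} (h : HasSum f S) : HasSum (shiftOne f) S := by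
  refine (hasSum_nat_add_iff' 1).mp ?_
  simpa [shiftOne] using h

lemma shiftTwo_hasSum {f : ℕ → ℂ} {S : ℂ} (h : HasSum f S) : HasSum (shiftTwo f) S := by
  refine (hasSum_nat_add_iff' 2).mp ?_
  simpa [shiftTwo, Finset.sum_range_succ] using h

example (r : ℝ) : ‖(r : ℂ)‖ = |r| := by rw [Complex.norm_real, Real.norm_eq_abs]


/-- with `g_n` as above (case `a = -1`), the generating function
`G(z) = ∑ g_n zⁿ` equals `1/((z/α;q²)_∞ (z/β;q²)_∞)`, where `α, β` are the roots of
`1 - (1+q)z - qz² = (1 - z/α)(1 - z/β)` with `α < 0 < β` and `β < |α|`. -/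
theorem gSeq_generating_function (q : ℝ) (hq0 : 0 < q) (hq1 : q < 1)
    (α β : ℝ) (hα : α < 0) (hβ : 0 < β) (hβα : β < |α|)
    (hroots : ∀ z : ℝ, 1 - (1 + q) * z - q * z ^ 2 = (1 - z / α) * (1 - z / β)) :
    ∀ z : ℂ, ‖z‖ < β →
      HasSum (fun n : ℕ => ((gSeq q n : ℝ) : ℂ) * z ^ n)
        ((∏' k : ℕ, (1 - z / (α : ℂ) * ((q : ℂ) ^ 2) ^ k)) *
          (∏' k : ℕ, (1 - z / (β : ℂ) * ((q : ℂ) ^ 2) ^ k)))⁻¹ := by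

  intro z hz
  have hα0 : α ≠ 0 := ne_of_lt hα
  have hβ0 : β ≠ 0 := hβ.ne'
  -- root facts
  have hrβ : 1 - (1 + q) * β - q * β ^ 2 = 0 := by
    have h := hroots β
    rw [div_self hβ0] at h
    simpa using h
  have hrα : 1 - (1 + q) * α - q * α ^ 2 = 0 := by
    have h := hroots α
    rw [div_self hα0] at h
    simpa using h
  have hrootβ : (1 + q) * β + q * β ^ 2 = 1 := by linarith
  have hd : (α - β) * (q * (α + β) + (1 + q)) = 0 := by linear_combination hrβ - hrα
  have hsumαβ : q * (α + β) = -(1 + q) := by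
    rcases mul_eq_zero.mp hd with h | h
    · exact absurd h (sub_ne_zero.mpr (by linarith : α ≠ β))
    · linarith
  have hprodαβ : q * (α * β) = -1 := by linear_combination α * hsumαβ + hrα
  have hp : α⁻¹ * β⁻¹ = -q := by
    have hab : α * β = -q⁻¹ := by
      field_simp
      linarith [hprodαβ]
    rw [← mul_inv, hab, inv_neg, inv_inv]
  have hs : α⁻¹ + β⁻¹ = 1 + q := by
    have he : α⁻¹ + β⁻¹ = (α + β) * (α⁻¹ * β⁻¹) := by field_simp; ring
    rw [he, hp]
    nlinarith [hsumαβ]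
  -- complex setup
  set x : ℂ := (q : ℂ) ^ 2 with hxdef
  set A : ℂ := (α : ℂ) with hAdef
  set B : ℂ := (β : ℂ) with hBdef
  have hsC : A⁻¹ + B⁻¹ = 1 + (q : ℂ) := by
    rw [hAdef, hBdef]; exact_mod_cast hs
  have hpC : A⁻¹ * B⁻¹ = -(q : ℂ) := by
    rw [hAdef, hBdef]; exact_mod_cast hp
  have hxn : ‖x‖ = q ^ 2 := by
    rw [hxdef, norm_pow, Complex.norm_real, Real.norm_eq_abs, abs_of_pos hq0]
  have hx1 : ‖x‖ < 1 := by rw [hxn]; nlinarith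
  have hx0 : 0 ≤ ‖x‖ := norm_nonneg x
  have hAnorm : ‖A‖ = -α := by
    rw [hAdef, Complex.norm_real, Real.norm_eq_abs, abs_of_neg hα]
  have hBnorm : ‖B‖ = β := by
    rw [hBdef, Complex.norm_real, Real.norm_eq_abs, abs_of_pos hβ]
  have hβα' : β < -α := by rwa [abs_of_neg hα] at hβα
  have hdivA : ∀ w : ℂ, ‖w‖ < β → ‖w / A‖ < 1 := by
    intro w hw
    rw [norm_div, hAnorm, div_lt_one (by linarith)]
    linarith
  have hdivB : ∀ w : ℂ, ‖w‖ < β → ‖w / B‖ < 1 := by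
    intro w hw
    rw [norm_div, hBnorm, div_lt_one hβ]
    linarith
  have hxw : ∀ w : ℂ, ‖w‖ < β → ‖x * w‖ < β := by
    intro w hw
    rw [norm_mul, hxn]
    nlinarith [norm_nonneg w]
  -- summability and G
  have hsum_z : ∀ w : ℂ, ‖w‖ < β → Summable (fun n => ((gSeq q n : ℝ) : ℂ) * w ^ n) := by
    intro w hw
    apply Summable.of_norm
    have hreal := gSeq_summable q hq0 hq1 β hβ hrootβ ‖w‖ (norm_nonneg w) hw
    refine hreal.congr fun n => ?_
    rw [norm_mul, norm_pow, Complex.norm_real, Real.norm_eq_abs,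
      _root_.abs_of_nonneg (gSeq_nonneg q hq0 hq1 n)]
  set G : ℂ → ℂ := fun w => ∑' n : ℕ, ((gSeq q n : ℝ) : ℂ) * w ^ n with hGdef
  have hG : ∀ w : ℂ, ‖w‖ < β → HasSum (fun n => ((gSeq q n : ℝ) : ℂ) * w ^ n) (G w) :=
    fun w hw => (hsum_z w hw).hasSum
  -- functional equation
  have hg1 : q ^ 2 * gSeq q 1 + (1 + q) * gSeq q 0 = gSeq q 1 := by
    show q ^ 2 * (1 / (1 - q)) + (1 + q) * 1 = 1 / (1 - q)
    have h1q : (1 : ℝ) - q ≠ 0 := by intro h; nlinarith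
    field_simp
    ring
  have hfe : ∀ w : ℂ, ‖w‖ < β → (1 - w / A) * (1 - w / B) * G w = G (x * w) := by
    intro w hw
    have hG1 := hG w hw
    have hG2 := hG (x * w) (hxw w hw)
    have hu : HasSum (shiftOne fun m => (1 + (q : ℂ)) * w * (((gSeq q m : ℝ) : ℂ) * w ^ m))
        ((1 + (q : ℂ)) * w * G w) := shiftOne_hasSum (hG1.mul_left _)
    have hv : HasSum (shiftTwo fun m => (q : ℂ) * w ^ 2 * (((gSeq q m : ℝ) : ℂ) * w ^ m))
        ((q : ℂ) * w ^ 2 * G w) := shiftTwo_hasSum (hG1.mul_left _)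
    have hcomb := (hG2.add hu).add hv
    have hkey : (fun n => ((gSeq q n : ℝ) : ℂ) * (x * w) ^ n
          + shiftOne (fun m => (1 + (q : ℂ)) * w * (((gSeq q m : ℝ) : ℂ) * w ^ m)) n
          + shiftTwo (fun m => (q : ℂ) * w ^ 2 * (((gSeq q m : ℝ) : ℂ) * w ^ m)) n)
        = fun n => ((gSeq q n : ℝ) : ℂ) * w ^ n := by
      funext n
      match n with
      | 0 => simp [shiftOne, shiftTwo]
      | 1 =>
        simp only [shiftOne, shiftTwo, pow_one]
        have hc : (q : ℂ) ^ 2 * ((gSeq q 1 : ℝ) : ℂ) + (1 + (q : ℂ)) * ((gSeq q 0 : ℝ) : ℂ)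
            = ((gSeq q 1 : ℝ) : ℂ) := by exact_mod_cast congrArg (Complex.ofReal) hg1
        rw [hxdef]
        linear_combination w * hc
      | (m + 2) =>
        simp only [shiftOne, shiftTwo]
        have hrecC : ((gSeq q (m+2) : ℝ) : ℂ) * (1 - ((q : ℂ) ^ 2) ^ (m + 2))
            = (q : ℂ) * ((gSeq q m : ℝ) : ℂ) + (1 + (q : ℂ)) * ((gSeq q (m+1) : ℝ) : ℂ) := by
          have hr := gSeq_rec q hq0 hq1 m
          rw [pow_mul] at hr
          exact_mod_cast congrArg (Complex.ofReal) hr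
        rw [← hxdef] at hrecC
        linear_combination (-(w ^ (m + 2))) * hrecC
    rw [hkey] at hcomb
    have hGid : G w = G (x * w) + (1 + (q : ℂ)) * w * G w + (q : ℂ) * w ^ 2 * G w :=
      hG1.unique hcomb
    have hfac : (1 - w / A) * (1 - w / B) = 1 - (1 + (q : ℂ)) * w - (q : ℂ) * w ^ 2 := by
      rw [div_eq_mul_inv, div_eq_mul_inv]
      linear_combination (-w) * hsC + w ^ 2 * hpC
    rw [hfac]
    linear_combination hGid
  -- product functional equations
  have hPsplit : ∀ w : ℂ, ‖w‖ < β →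
      (∏' k : ℕ, (1 - w / A * x ^ k)) = (1 - w / A) * ∏' k : ℕ, (1 - (x * w) / A * x ^ k) := by
    intro w hw
    rw [qprod_split (w / A) x (hdivA w hw) hx1]
    congr 1
    exact tprod_congr fun k => by rw [mul_div_assoc']
  have hQsplit : ∀ w : ℂ, ‖w‖ < β →
      (∏' k : ℕ, (1 - w / B * x ^ k)) = (1 - w / B) * ∏' k : ℕ, (1 - (x * w) / B * x ^ k) := by
    intro w hw
    rw [qprod_split (w / B) x (hdivB w hw) hx1]
    congr 1
    exact tprod_congr fun k => by rw [mul_div_assoc']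
  -- one functional-equation step for H
  have hH : ∀ w : ℂ, ‖w‖ < β →
      G w * ((∏' k : ℕ, (1 - w / A * x ^ k)) * (∏' k : ℕ, (1 - w / B * x ^ k)))
      = G (x * w) * ((∏' k : ℕ, (1 - (x * w) / A * x ^ k))
          * (∏' k : ℕ, (1 - (x * w) / B * x ^ k))) := by
    intro w hw
    rw [hPsplit w hw, hQsplit w hw]
    have := hfe w hw
    linear_combination ((∏' k : ℕ, (1 - (x * w) / A * x ^ k))
      * (∏' k : ℕ, (1 - (x * w) / B * x ^ k))) * this
  -- iteration
  have hxnz : ∀ n : ℕ, ‖x ^ n * z‖ < β := by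
    intro n
    rw [norm_mul, norm_pow, hxn]
    have h1 : (q ^ 2) ^ n ≤ 1 := pow_le_one₀ (by positivity) (by nlinarith)
    nlinarith [norm_nonneg z, pow_nonneg (sq_nonneg q) n]
  have hiter : ∀ n : ℕ,
      G z * ((∏' k : ℕ, (1 - z / A * x ^ k)) * (∏' k : ℕ, (1 - z / B * x ^ k)))
      = G (x ^ n * z) * ((∏' k : ℕ, (1 - (x ^ n * z) / A * x ^ k))
          * (∏' k : ℕ, (1 - (x ^ n * z) / B * x ^ k))) := by
    intro n
    induction n with
    | zero => simp
    | succ n ih =>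
      rw [ih, hH (x ^ n * z) (hxnz n)]
      rw [show x ^ (n + 1) * z = x * (x ^ n * z) by ring]
  -- limit of G along x^n z
  set t : ℝ := (‖z‖ + β) / 2 with htdef
  have ht0 : 0 < t := by rw [htdef]; positivity
  have hzt : ‖z‖ ≤ t := by rw [htdef]; linarith
  have htβ : t < β := by rw [htdef]; linarith [norm_nonneg z]
  clear_value t
  have hCsum : Summable (fun m : ℕ => gSeq q (m + 1) * t ^ m) := by
    have h1 : Summable (fun m : ℕ => gSeq q (m + 1) * t ^ (m + 1)) :=
      (summable_nat_add_iff (f := fun n => gSeq q n * t ^ n) 1).2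
        (gSeq_summable q hq0 hq1 β hβ hrootβ t ht0.le htβ)
    refine (h1.mul_left t⁻¹).congr fun m => ?_
    field_simp
    ring
  set C : ℝ := ∑' m : ℕ, gSeq q (m + 1) * t ^ m with hCdef
  have hbound : ∀ w : ℂ, ‖w‖ ≤ ‖z‖ → ‖G w - 1‖ ≤ ‖w‖ * C := by
    intro w hwz
    have hw : ‖w‖ < β := lt_of_le_of_lt hwz hz
    have hGw := hG w hw
    have htail : HasSum (fun m : ℕ => ((gSeq q (m + 1) : ℝ) : ℂ) * w ^ (m + 1)) (G w - 1) := by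
      have h := (hasSum_nat_add_iff' (f := fun n => ((gSeq q n : ℝ) : ℂ) * w ^ n) 1).mpr hGw
      simpa [gSeq] using h
    have hns : Summable (fun m : ℕ => gSeq q (m + 1) * ‖w‖ ^ (m + 1)) :=
      (summable_nat_add_iff (f := fun n => gSeq q n * ‖w‖ ^ n) 1).2
        (gSeq_summable q hq0 hq1 β hβ hrootβ ‖w‖ (norm_nonneg w) hw)
    have hnorm_eq : ∀ m : ℕ, ‖((gSeq q (m + 1) : ℝ) : ℂ) * w ^ (m + 1)‖
        = gSeq q (m + 1) * ‖w‖ ^ (m + 1) := by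
      intro m
      rw [norm_mul, norm_pow, Complex.norm_real, Real.norm_eq_abs,
        _root_.abs_of_nonneg (gSeq_nonneg q hq0 hq1 (m + 1))]
    have h1 : ‖G w - 1‖ ≤ ∑' m : ℕ, gSeq q (m + 1) * ‖w‖ ^ (m + 1) := by
      rw [← htail.tsum_eq]
      refine (norm_tsum_le_tsum_norm ?_).trans_eq ?_
      · exact hns.congr fun m => (hnorm_eq m).symm
      · exact tsum_congr hnorm_eq
    refine h1.trans ?_
    have h2 : ∀ m : ℕ, gSeq q (m + 1) * ‖w‖ ^ (m + 1) ≤ ‖w‖ * (gSeq q (m + 1) * t ^ m) := by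
      intro m
      have hwt : ‖w‖ ≤ t := le_trans hwz hzt
      have h3 : ‖w‖ ^ (m + 1) ≤ ‖w‖ * t ^ m := by
        calc ‖w‖ ^ (m + 1) = ‖w‖ * ‖w‖ ^ m := by ring
          _ ≤ ‖w‖ * t ^ m := by gcongr
      calc gSeq q (m + 1) * ‖w‖ ^ (m + 1)
          ≤ gSeq q (m + 1) * (‖w‖ * t ^ m) :=
            mul_le_mul_of_nonneg_left h3 (gSeq_nonneg q hq0 hq1 (m + 1))
        _ = ‖w‖ * (gSeq q (m + 1) * t ^ m) := by ring
    calc ∑' m : ℕ, gSeq q (m + 1) * ‖w‖ ^ (m + 1)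
        ≤ ∑' m : ℕ, ‖w‖ * (gSeq q (m + 1) * t ^ m) :=
          Summable.tsum_le_tsum h2 hns (hCsum.mul_left ‖w‖)
      _ = ‖w‖ * C := by rw [tsum_mul_left, ← hCdef]
  have hGlim : Tendsto (fun n : ℕ => G (x ^ n * z)) atTop (nhds 1) := by
    have hb : ∀ n : ℕ, ‖G (x ^ n * z) - 1‖ ≤ (q ^ 2) ^ n * (‖z‖ * C) := by
      intro n
      have hq2le : (q ^ 2) ^ n ≤ 1 := pow_le_one₀ (sq_nonneg q) (pow_le_one₀ hq0.le hq1.le)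
      have hle : ‖x ^ n * z‖ ≤ ‖z‖ := by
        rw [norm_mul, norm_pow, hxn]
        calc (q ^ 2) ^ n * ‖z‖ ≤ 1 * ‖z‖ := mul_le_mul_of_nonneg_right hq2le (norm_nonneg z)
          _ = ‖z‖ := one_mul _
      have hbb := hbound (x ^ n * z) hle
      rw [norm_mul, norm_pow, hxn] at hbb
      calc ‖G (x ^ n * z) - 1‖ ≤ (q ^ 2) ^ n * ‖z‖ * C := hbb
        _ = (q ^ 2) ^ n * (‖z‖ * C) := by ring
    have hgeo : Tendsto (fun n : ℕ => (q ^ 2) ^ n * (‖z‖ * C)) atTop (nhds 0) := by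
      rw [show (0 : ℝ) = 0 * (‖z‖ * C) by ring]
      exact (tendsto_pow_atTop_nhds_zero_of_lt_one (sq_nonneg q)
        (pow_lt_one₀ hq0.le hq1 two_ne_zero)).mul_const _
    have h0 : Tendsto (fun n : ℕ => G (x ^ n * z) - 1) atTop (nhds 0) := squeeze_zero_norm hb hgeo
    have h1 := h0.add_const (1 : ℂ)
    simpa using h1
  have hPlim : Tendsto (fun n : ℕ => ∏' k : ℕ, (1 - (x ^ n * z) / A * x ^ k)) atTop (nhds 1) := by
    refine (qprod_tail_tendsto (z / A) x (hdivA z hz) hx1).congr fun n => ?_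
    exact tprod_congr fun k => by rw [pow_add]; ring
  have hQlim : Tendsto (fun n : ℕ => ∏' k : ℕ, (1 - (x ^ n * z) / B * x ^ k)) atTop (nhds 1) := by
    refine (qprod_tail_tendsto (z / B) x (hdivB z hz) hx1).congr fun n => ?_
    exact tprod_congr fun k => by rw [pow_add]; ring
  have hlim : Tendsto (fun n : ℕ => G (x ^ n * z) * ((∏' k : ℕ, (1 - (x ^ n * z) / A * x ^ k))
      * (∏' k : ℕ, (1 - (x ^ n * z) / B * x ^ k)))) atTop (nhds 1) := by
    have h := hGlim.mul (hPlim.mul hQlim)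
    simpa using h
  have hone : G z * ((∏' k : ℕ, (1 - z / A * x ^ k)) * (∏' k : ℕ, (1 - z / B * x ^ k))) = 1 := by
    refine tendsto_nhds_unique (f := fun n : ℕ => G (x ^ n * z)
      * ((∏' k : ℕ, (1 - (x ^ n * z) / A * x ^ k))
        * (∏' k : ℕ, (1 - (x ^ n * z) / B * x ^ k)))) ?_ hlim
    refine tendsto_const_nhds.congr fun n => ?_
    exact hiter n
  have hfinal : G z = ((∏' k : ℕ, (1 - z / A * x ^ k)) * (∏' k : ℕ, (1 - z / B * x ^ k)))⁻¹ :=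
    eq_inv_of_mul_eq_one_left hone
  rw [← hfinal]
  exact hG z hz
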